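/- Let (Ω,μ) be a measure space, let p ∈ (1,∞) with conjugate index q (1/p + 1/q = 1), let U ∈ B(L¹(Ω), L^p(Ω)), let f₁,…,fₙ ∈ L^q(Ω) have pairwise disjoint supports, and let x₁,…,xₙ ∈ L^p(Ω) have pairwise disjoint supports. Define T : L¹(Ω) → L^p(Ω) by T(a) = Σ_{i=1}^{n} (∫_Ω U(a) fᵢ dμ) xᵢ. Then T is a bounded linear operator and ‖T‖ ≤ ‖U‖ · max{‖fᵢ‖_q ‖xᵢ‖_p : 1 ≤ i ≤ n}. -/

import Mathlib

open MeasureTheory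
open scoped ENNReal

/-- Auxiliary: pointwise bound for a sum of scalars times "pairwise disjoint" values. -/
lemma aux_sum_norm_rpow {n : ℕ} (c a : Fin n → ℂ) {p : ℝ} (hp : 0 < p)
    (h : ∀ i j, i ≠ j → a i * a j = 0) :
    (‖∑ i, c i * a i‖₊ : ℝ≥0∞) ^ p ≤ ∑ i, (‖c i‖₊ : ℝ≥0∞) ^ p * (‖a i‖₊ : ℝ≥0∞) ^ p := by
  by_cases hA : ∀ i, a i = 0
  · simp [hA, ENNReal.zero_rpow_of_pos hp]
  · push_neg at hA
    obtain ⟨i₀, hi₀⟩ := hA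
    have hz : ∀ j, j ≠ i₀ → a j = 0 := by
      intro j hj
      rcases mul_eq_zero.mp (h j i₀ hj) with h' | h'
      · exact h'
      · exact absurd h' hi₀
    have hsum : ∑ i, c i * a i = c i₀ * a i₀ :=
      Finset.sum_eq_single i₀ (fun j _ hj => by rw [hz j hj, mul_zero]) (by simp)
    rw [hsum]
    calc (‖c i₀ * a i₀‖₊ : ℝ≥0∞) ^ p
        = (‖c i₀‖₊ : ℝ≥0∞) ^ p * (‖a i₀‖₊ : ℝ≥0∞) ^ p := by
          rw [nnnorm_mul, ENNReal.coe_mul, ENNReal.mul_rpow_of_nonneg _ _ hp.le]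
      _ ≤ ∑ i, (‖c i‖₊ : ℝ≥0∞) ^ p * (‖a i‖₊ : ℝ≥0∞) ^ p :=
          Finset.single_le_sum (f := fun i => (‖c i‖₊ : ℝ≥0∞) ^ p * (‖a i‖₊ : ℝ≥0∞) ^ p)
            (fun i _ => zero_le) (Finset.mem_univ i₀)

/-- Auxiliary: a.e. pointwise identification of the coercion of a finite sum in `Lp`. -/
lemma aux_coeFn_sum {α : Type*} [MeasurableSpace α] {μ : Measure α} {P : ℝ≥0∞} {n : ℕ}
    (v : Fin n → Lp ℂ P μ) :
    (↑(∑ i, v i) : α → ℂ) =ᵐ[μ] fun t => ∑ i, (v i : α → ℂ) t := by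
  classical
  induction (Finset.univ : Finset (Fin n)) using Finset.induction_on with
  | empty => simp only [Finset.sum_empty]; exact Lp.coeFn_zero ℂ P μ
  | @insert b s hnot ih =>
    calc (↑(∑ i ∈ insert b s, v i) : α → ℂ) = ↑(v b + ∑ i ∈ s, v i) := by
          rw [Finset.sum_insert hnot]
      _ =ᵐ[μ] (v b : α → ℂ) + ↑(∑ i ∈ s, v i) := Lp.coeFn_add _ _
      _ =ᵐ[μ] fun u => ∑ i ∈ insert b s, (v i : α → ℂ) u := by
          filter_upwards [ih] with u hu
          rw [Finset.sum_insert hnot, Pi.add_apply, hu]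

/-- let `(Ω,μ)` be a measure space, `p ∈ (1,∞)` with conjugate index `q`,
`U ∈ B(L¹(Ω), L^p(Ω))`, let `f₁,…,fₙ ∈ L^q(Ω)` have pairwise disjoint supports and
`x₁,…,xₙ ∈ L^p(Ω)` have pairwise disjoint supports. Then the map
`T : a ↦ Σᵢ (∫ U(a) fᵢ dμ) xᵢ` is a bounded linear operator `L¹(Ω) → L^p(Ω)` with
`‖T‖ ≤ ‖U‖ · maxᵢ ‖fᵢ‖_q ‖xᵢ‖_p`. -/
theorem rank_n_operator_norm_estimate
    {α : Type*} [MeasurableSpace α] (μ : Measure α)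
    (p q : ℝ) (hp : 1 < p) (hq : 1 / p + 1 / q = 1)
    [Fact (1 ≤ ENNReal.ofReal p)] [Fact (1 ≤ ENNReal.ofReal q)]
    (U : Lp ℂ 1 μ →L[ℂ] Lp ℂ (ENNReal.ofReal p) μ)
    (n : ℕ) (f : Fin n → Lp ℂ (ENNReal.ofReal q) μ)
    (x : Fin n → Lp ℂ (ENNReal.ofReal p) μ)
    (hf : ∀ i j, i ≠ j → (fun t => (f i : α → ℂ) t * (f j : α → ℂ) t) =ᵐ[μ] 0)
    (hx : ∀ i j, i ≠ j → (fun t => (x i : α → ℂ) t * (x j : α → ℂ) t) =ᵐ[μ] 0) :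
    ∃ T : Lp ℂ 1 μ →L[ℂ] Lp ℂ (ENNReal.ofReal p) μ,
      (∀ a : Lp ℂ 1 μ,
        T a = ∑ i, (∫ t, (U a : α → ℂ) t * (f i : α → ℂ) t ∂μ) • x i) ∧
      ‖T‖ ≤ ‖U‖ * ⨆ i, ‖f i‖ * ‖x i‖ := by
  classical
  have hp0 : 0 < p := lt_trans zero_lt_one hp
  have hpq : p.HolderConjugate q := Real.holderConjugate_iff.mpr ⟨hp, by rwa [one_div, one_div] at hq⟩
  have hq0 : 0 < q := hpq.symm.pos
  have hPtoReal : (ENNReal.ofReal p).toReal = p := ENNReal.toReal_ofReal hp0.le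
  have hQtoReal : (ENNReal.ofReal q).toReal = q := ENNReal.toReal_ofReal hq0.le
  have hPne0 : ENNReal.ofReal p ≠ 0 := by
    simp [ENNReal.ofReal_eq_zero, not_le, hp0]
  have hQne0 : ENNReal.ofReal q ≠ 0 := by
    simp [ENNReal.ofReal_eq_zero, not_le, hq0]
  have hPnetop : ENNReal.ofReal p ≠ ∞ := ENNReal.ofReal_ne_top
  have hQnetop : ENNReal.ofReal q ≠ ∞ := ENNReal.ofReal_ne_top
  -- measurable representatives of the f i
  have hfm : ∀ i, AEStronglyMeasurable (f i : α → ℂ) μ :=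
    fun i => Lp.aestronglyMeasurable (f i)
  set g : Fin n → α → ℂ := fun i => (hfm i).mk _ with hgdef
  have hgf : ∀ i, (f i : α → ℂ) =ᵐ[μ] g i := fun i => (hfm i).ae_eq_mk
  have hgmeas : ∀ i, StronglyMeasurable (g i) := fun i => (hfm i).stronglyMeasurable_mk
  -- essentially disjoint measurable "supports"
  set S : Fin n → Set α :=
    fun i => (g i) ⁻¹' ({0}ᶜ) ∩ ⋂ j ∈ ({i}ᶜ : Set (Fin n)), (g j) ⁻¹' {0} with hSdef
  have hSmeas : ∀ i, MeasurableSet (S i) := by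
    intro i
    refine MeasurableSet.inter ?_ ?_
    · exact (hgmeas i).measurable (measurableSet_singleton (0 : ℂ)).compl
    · exact MeasurableSet.biInter (Set.to_countable _)
        (fun j _ => (hgmeas j).measurable (measurableSet_singleton (0 : ℂ)))
  have hS_ne : ∀ i t, t ∈ S i → g i t ≠ 0 := fun i t ht => ht.1
  have hS_zero : ∀ i t, t ∈ S i → ∀ j, j ≠ i → g j t = 0 := by
    intro i t ht j hj
    exact Set.mem_iInter₂.mp ht.2 j hj
  have hSdisj : ∀ i j t, i ≠ j → t ∈ S i → t ∉ S j := by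
    intro i j t hij hti htj
    exact hS_ne i t hti (hS_zero j t htj i hij)
  -- f i is a.e. equal to the indicator of S i applied to g i
  have hind : ∀ i, (f i : α → ℂ) =ᵐ[μ] (S i).indicator (g i) := by
    intro i
    have h1 : ∀ᵐ t ∂μ, ∀ j, j ≠ i → g i t * g j t = 0 := by
      rw [ae_all_iff]
      intro j
      by_cases hj : j = i
      · exact Filter.Eventually.of_forall fun t hji => absurd hj hji
      · filter_upwards [hf i j (Ne.symm hj), hgf i, hgf j] with t ht hgi hgj
        intro _
        rw [← hgi, ← hgj]
        exact ht
    filter_upwards [h1, hgf i] with t ht hgt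
    by_cases h0 : g i t = 0
    · have hnot : t ∉ S i := fun hmem => hS_ne i t hmem h0
      rw [hgt, Set.indicator_of_notMem hnot, h0]
    · have hmem : t ∈ S i := by
        refine ⟨h0, Set.mem_iInter₂.mpr fun j hj => ?_⟩
        have := ht j (by simpa using hj)
        rcases mul_eq_zero.mp this with h' | h'
        · exact absurd h' h0
        · exact h'
      rw [hgt, Set.indicator_of_mem hmem]
  -- coefficients
  set c : Lp ℂ 1 μ → Fin n → ℂ :=
    fun a i => ∫ t, (U a : α → ℂ) t * (f i : α → ℂ) t ∂μ with hcdef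
  -- finiteness of the relevant lintegrals
  have hUaFin : ∀ a : Lp ℂ 1 μ,
      ∫⁻ t, (‖(U a : α → ℂ) t‖₊ : ℝ≥0∞) ^ p ∂μ < ∞ := by
    intro a
    have h := Lp.eLpNorm_lt_top (U a)
    rw [eLpNorm_eq_lintegral_rpow_enorm_toReal hPne0 hPnetop, hPtoReal] at h
    exact (ENNReal.rpow_lt_top_iff_of_pos (by positivity : (0:ℝ) < 1 / p)).mp h
  have hfFin : ∀ i, ∫⁻ t, (‖(f i : α → ℂ) t‖₊ : ℝ≥0∞) ^ q ∂μ < ∞ := by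
    intro i
    have h := Lp.eLpNorm_lt_top (f i)
    rw [eLpNorm_eq_lintegral_rpow_enorm_toReal hQne0 hQnetop, hQtoReal] at h
    exact (ENNReal.rpow_lt_top_iff_of_pos (by positivity : (0:ℝ) < 1 / q)).mp h
  -- integrability of the products (Hölder)
  have hInt : ∀ (a : Lp ℂ 1 μ) (i),
      Integrable (fun t => (U a : α → ℂ) t * (f i : α → ℂ) t) μ := by
    intro a i
    refine ⟨(Lp.aestronglyMeasurable (U a)).mul (hfm i), ?_⟩
    rw [hasFiniteIntegral_def]
    calc ∫⁻ t, (‖(U a : α → ℂ) t * (f i : α → ℂ) t‖₊ : ℝ≥0∞) ∂μ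
        ≤ (∫⁻ t, (‖(U a : α → ℂ) t‖₊ : ℝ≥0∞) ^ p ∂μ) ^ (1/p) *
          (∫⁻ t, (‖(f i : α → ℂ) t‖₊ : ℝ≥0∞) ^ q ∂μ) ^ (1/q) := by
          simpa [nnnorm_mul, ENNReal.coe_mul, enorm_eq_nnnorm] using
            ENNReal.lintegral_mul_le_Lp_mul_Lq μ hpq
              (Lp.aestronglyMeasurable (U a)).enorm (hfm i).enorm
      _ < ∞ := ENNReal.mul_lt_top
          (ENNReal.rpow_lt_top_of_nonneg (by positivity) (hUaFin a).ne)
          (ENNReal.rpow_lt_top_of_nonneg (by positivity) (hfFin i).ne)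
  -- linearity of the coefficients
  have hc_add : ∀ a b i, c (a + b) i = c a i + c b i := by
    intro a b i
    have h1 : (U (a + b) : α → ℂ) =ᵐ[μ] (U a : α → ℂ) + (U b : α → ℂ) := by
      rw [map_add]; exact Lp.coeFn_add _ _
    calc c (a + b) i
        = ∫ t, ((U a : α → ℂ) t * (f i : α → ℂ) t
            + (U b : α → ℂ) t * (f i : α → ℂ) t) ∂μ := by
          refine integral_congr_ae ?_
          filter_upwards [h1] with t ht
          rw [ht]
          simp [add_mul]
      _ = c a i + c b i := integral_add (hInt a i) (hInt b i)
  have hc_smul : ∀ (s : ℂ) a i, c (s • a) i = s * c a i := by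
    intro s a i
    have h1 : (U (s • a) : α → ℂ) =ᵐ[μ] s • (U a : α → ℂ) := by
      rw [ContinuousLinearMap.map_smul]; exact Lp.coeFn_smul _ _
    calc c (s • a) i
        = ∫ t, s • ((U a : α → ℂ) t * (f i : α → ℂ) t) ∂μ := by
          refine integral_congr_ae ?_
          filter_upwards [h1] with t ht
          rw [ht]
          simp [smul_eq_mul, mul_assoc]
      _ = s * c a i := by rw [integral_smul]; rfl
  -- the linear map
  set L : Lp ℂ 1 μ →ₗ[ℂ] Lp ℂ (ENNReal.ofReal p) μ :=
    { toFun := fun a => ∑ i, c a i • x i,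
      map_add' := by
        intro a b
        simp only [hc_add, add_smul]
        rw [Finset.sum_add_distrib],
      map_smul' := by
        intro s a
        simp only [hc_smul, mul_smul, RingHom.id_apply]
        rw [Finset.smul_sum] } with hLdef
  -- the sup
  set M : ℝ := ⨆ i, ‖f i‖ * ‖x i‖ with hMdef
  have hM0 : 0 ≤ M :=
    Real.iSup_nonneg fun i => mul_nonneg (norm_nonneg _) (norm_nonneg _)
  have hMle : ∀ i, ‖f i‖ * ‖x i‖ ≤ M :=
    fun i => le_ciSup (f := fun i => ‖f i‖ * ‖x i‖) (Set.Finite.bddAbove (Set.finite_range _)) i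
  -- a.e. disjointness of the x i, all pairs at once
  have hxdisj : ∀ᵐ t ∂μ, ∀ i j, i ≠ j → (x i : α → ℂ) t * (x j : α → ℂ) t = 0 := by
    rw [ae_all_iff]
    intro i
    rw [ae_all_iff]
    intro j
    by_cases hij : i = j
    · exact Filter.Eventually.of_forall fun t h => absurd hij h
    · filter_upwards [hx i j hij] with t ht _
      exact ht
  -- the key norm bound
  have key : ∀ a : Lp ℂ 1 μ, ‖∑ i, c a i • x i‖ ≤ ‖U‖ * M * ‖a‖ := by
    intro a
    set G : α → ℂ := (U a : α → ℂ) with hGdef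
    have hGm : AEStronglyMeasurable G μ := Lp.aestronglyMeasurable (U a)
    set A : Fin n → ℝ≥0∞ :=
      fun i => (∫⁻ t in S i, (‖G t‖₊ : ℝ≥0∞) ^ p ∂μ) ^ (1/p) with hAdef
    -- coefficient bound via Hölder on S i
    have hcoef : ∀ i, (‖c a i‖₊ : ℝ≥0∞) ≤ A i * eLpNorm (f i) (ENNReal.ofReal q) μ := by
      intro i
      calc (‖c a i‖₊ : ℝ≥0∞)
          ≤ ∫⁻ t, ‖G t * (f i : α → ℂ) t‖₊ ∂μ :=
            enorm_integral_le_lintegral_enorm _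
        _ = ∫⁻ t, ‖G t * (S i).indicator (g i) t‖₊ ∂μ := by
            refine lintegral_congr_ae ?_
            filter_upwards [hind i] with t ht
            rw [ht]
        _ = ∫⁻ t in S i, (‖G t‖₊ : ℝ≥0∞) * (‖g i t‖₊ : ℝ≥0∞) ∂μ := by
            rw [← lintegral_indicator (hSmeas i)]
            refine lintegral_congr fun t => ?_
            by_cases hts : t ∈ S i
            · simp [Set.indicator_of_mem hts, nnnorm_mul]
            · simp [Set.indicator_of_notMem hts]
        _ ≤ (∫⁻ t in S i, (‖G t‖₊ : ℝ≥0∞) ^ p ∂μ) ^ (1/p)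
              * (∫⁻ t in S i, (‖g i t‖₊ : ℝ≥0∞) ^ q ∂μ) ^ (1/q) := by
            simpa [one_div, enorm_eq_nnnorm] using ENNReal.lintegral_mul_le_Lp_mul_Lq (μ.restrict (S i)) hpq
              hGm.enorm.restrict (hgmeas i).aestronglyMeasurable.enorm.restrict
        _ ≤ A i * eLpNorm (f i) (ENNReal.ofReal q) μ := by
            refine mul_le_mul_right ?_ _
            rw [eLpNorm_eq_lintegral_rpow_enorm_toReal hQne0 hQnetop, hQtoReal]
            refine ENNReal.rpow_le_rpow ?_ (by positivity)
            calc ∫⁻ t in S i, (‖g i t‖₊ : ℝ≥0∞) ^ q ∂μ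
                ≤ ∫⁻ t, (‖g i t‖₊ : ℝ≥0∞) ^ q ∂μ := setLIntegral_le_lintegral _ _
              _ = ∫⁻ t, (‖(f i : α → ℂ) t‖₊ : ℝ≥0∞) ^ q ∂μ := by
                  refine lintegral_congr_ae ?_
                  filter_upwards [hgf i] with t ht
                  rw [ht]
    -- identify the norm of the sum
    have hsum_coe : (↑(∑ i, c a i • x i) : α → ℂ)
        =ᵐ[μ] fun t => ∑ i, c a i * (x i : α → ℂ) t := by
      have h1 := aux_coeFn_sum (fun i => c a i • x i)
      have h2 : ∀ᵐ t ∂μ, ∀ i, ((c a i • x i : Lp ℂ (ENNReal.ofReal p) μ) : α → ℂ) t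
          = c a i * (x i : α → ℂ) t := by
        rw [ae_all_iff]
        intro i
        filter_upwards [Lp.coeFn_smul (c a i) (x i)] with t ht
        rw [ht]; simp
      filter_upwards [h1, h2] with t ht1 ht2
      rw [ht1]
      exact Finset.sum_congr rfl fun i _ => ht2 i
    have hXi : ∀ i, ∫⁻ t, (‖(x i : α → ℂ) t‖₊ : ℝ≥0∞) ^ p ∂μ
        = (eLpNorm (x i) (ENNReal.ofReal p) μ) ^ p := by
      intro i
      rw [eLpNorm_eq_lintegral_rpow_enorm_toReal hPne0 hPnetop, hPtoReal, ← ENNReal.rpow_mul,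
        one_div_mul_cancel hp0.ne', ENNReal.rpow_one]
      rfl
    -- main lintegral estimate
    have hI : ∫⁻ t, (‖∑ i, c a i * (x i : α → ℂ) t‖₊ : ℝ≥0∞) ^ p ∂μ
        ≤ ∑ i, (‖c a i‖₊ : ℝ≥0∞) ^ p * (eLpNorm (x i) (ENNReal.ofReal p) μ) ^ p := by
      calc ∫⁻ t, (‖∑ i, c a i * (x i : α → ℂ) t‖₊ : ℝ≥0∞) ^ p ∂μ
          ≤ ∫⁻ t, ∑ i, (‖c a i‖₊ : ℝ≥0∞) ^ p * (‖(x i : α → ℂ) t‖₊ : ℝ≥0∞) ^ p ∂μ := by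
            refine lintegral_mono_ae ?_
            filter_upwards [hxdisj] with t ht
            exact aux_sum_norm_rpow (c a) (fun i => (x i : α → ℂ) t) hp0
              (fun i j hij => ht i j hij)
        _ = ∑ i, ∫⁻ t, (‖c a i‖₊ : ℝ≥0∞) ^ p * (‖(x i : α → ℂ) t‖₊ : ℝ≥0∞) ^ p ∂μ :=
            lintegral_finset_sum' _ fun i _ =>
              ((Lp.aestronglyMeasurable (x i)).enorm.pow_const p).const_mul _
        _ = ∑ i, (‖c a i‖₊ : ℝ≥0∞) ^ p * (eLpNorm (x i) (ENNReal.ofReal p) μ) ^ p := by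
            refine Finset.sum_congr rfl fun i _ => ?_
            rw [lintegral_const_mul'' _ (f := fun t => (‖(x i : α → ℂ) t‖₊ : ℝ≥0∞) ^ p) ((Lp.aestronglyMeasurable (x i)).enorm.pow_const p),
              hXi i]
    -- bound the coefficients
    have hFX : ∀ i, eLpNorm (f i) (ENNReal.ofReal q) μ * eLpNorm (x i) (ENNReal.ofReal p) μ
        ≤ ENNReal.ofReal M := by
      intro i
      have h1 : eLpNorm (f i) (ENNReal.ofReal q) μ = ENNReal.ofReal ‖f i‖ := by
        rw [Lp.norm_def, ENNReal.ofReal_toReal (Lp.eLpNorm_ne_top _)]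
      have h2 : eLpNorm (x i) (ENNReal.ofReal p) μ = ENNReal.ofReal ‖x i‖ := by
        rw [Lp.norm_def, ENNReal.ofReal_toReal (Lp.eLpNorm_ne_top _)]
      rw [h1, h2, ← ENNReal.ofReal_mul (norm_nonneg _)]
      exact ENNReal.ofReal_le_ofReal (hMle i)
    have h2 : ∫⁻ t, (‖∑ i, c a i * (x i : α → ℂ) t‖₊ : ℝ≥0∞) ^ p ∂μ
        ≤ (ENNReal.ofReal M) ^ p * ∑ i, (A i) ^ p := by
      refine hI.trans ?_
      calc ∑ i, (‖c a i‖₊ : ℝ≥0∞) ^ p * (eLpNorm (x i) (ENNReal.ofReal p) μ) ^ p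
          ≤ ∑ i, (A i * eLpNorm (f i) (ENNReal.ofReal q) μ) ^ p
              * (eLpNorm (x i) (ENNReal.ofReal p) μ) ^ p := by
            refine Finset.sum_le_sum fun i _ => ?_
            exact mul_le_mul_left (ENNReal.rpow_le_rpow (hcoef i) hp0.le) _
        _ = ∑ i, (A i) ^ p * (eLpNorm (f i) (ENNReal.ofReal q) μ
              * eLpNorm (x i) (ENNReal.ofReal p) μ) ^ p := by
            refine Finset.sum_congr rfl fun i _ => ?_
            rw [ENNReal.mul_rpow_of_nonneg _ _ hp0.le,
              ENNReal.mul_rpow_of_nonneg _ _ hp0.le, mul_assoc]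
        _ ≤ ∑ i, (A i) ^ p * (ENNReal.ofReal M) ^ p := by
            refine Finset.sum_le_sum fun i _ => ?_
            exact mul_le_mul_right (ENNReal.rpow_le_rpow (hFX i) hp0.le) _
        _ = (ENNReal.ofReal M) ^ p * ∑ i, (A i) ^ p := by
            rw [← Finset.sum_mul, mul_comm]
    -- the disjointness of the S i
    have h3 : ∑ i, (A i) ^ p ≤ ∫⁻ t, (‖G t‖₊ : ℝ≥0∞) ^ p ∂μ := by
      have hA : ∀ i, (A i) ^ p = ∫⁻ t in S i, (‖G t‖₊ : ℝ≥0∞) ^ p ∂μ := by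
        intro i
        rw [hAdef, ← ENNReal.rpow_mul, one_div_mul_cancel hp0.ne', ENNReal.rpow_one]
      have hmeas : AEMeasurable (fun t => (‖G t‖₊ : ℝ≥0∞) ^ p) μ :=
        hGm.enorm.pow_const p
      calc ∑ i, (A i) ^ p
          = ∑ i, ∫⁻ t, (S i).indicator (fun t => (‖G t‖₊ : ℝ≥0∞) ^ p) t ∂μ := by
            refine Finset.sum_congr rfl fun i _ => ?_
            rw [hA i, ← lintegral_indicator (hSmeas i)]
        _ = ∫⁻ t, ∑ i, (S i).indicator (fun t => (‖G t‖₊ : ℝ≥0∞) ^ p) t ∂μ :=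
            (lintegral_finset_sum' _ fun i _ => hmeas.indicator (hSmeas i)).symm
        _ ≤ ∫⁻ t, (‖G t‖₊ : ℝ≥0∞) ^ p ∂μ := by
            refine lintegral_mono fun t => ?_
            by_cases hex : ∃ i, t ∈ S i
            · obtain ⟨i₀, hi₀⟩ := hex
              have : ∑ i, (S i).indicator (fun t => (‖G t‖₊ : ℝ≥0∞) ^ p) t
                  = (‖G t‖₊ : ℝ≥0∞) ^ p := by
                rw [Finset.sum_eq_single i₀
                  (fun j _ hj => Set.indicator_of_notMem (hSdisj i₀ j t (Ne.symm hj) hi₀) _)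
                  (by simp), Set.indicator_of_mem hi₀]
              rw [this]
            · push_neg at hex
              have : ∀ i : Fin n, (S i).indicator (fun t => (‖G t‖₊ : ℝ≥0∞) ^ p) t = 0 :=
                fun i => Set.indicator_of_notMem (hex i) _
              simp [this]
    have h4 : ∫⁻ t, (‖G t‖₊ : ℝ≥0∞) ^ p ∂μ = (eLpNorm (U a) (ENNReal.ofReal p) μ) ^ p := by
      rw [eLpNorm_eq_lintegral_rpow_enorm_toReal hPne0 hPnetop, hPtoReal, ← ENNReal.rpow_mul,
        one_div_mul_cancel hp0.ne', ENNReal.rpow_one]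
      rfl
    -- put the estimates together
    have h5 : eLpNorm (fun t => ∑ i, c a i * (x i : α → ℂ) t) (ENNReal.ofReal p) μ
        ≤ ENNReal.ofReal M * eLpNorm (U a) (ENNReal.ofReal p) μ := by
      rw [eLpNorm_eq_lintegral_rpow_enorm_toReal hPne0 hPnetop, hPtoReal]
      have : ∫⁻ t, (‖∑ i, c a i * (x i : α → ℂ) t‖₊ : ℝ≥0∞) ^ p ∂μ
          ≤ (ENNReal.ofReal M * eLpNorm (U a) (ENNReal.ofReal p) μ) ^ p := by
        rw [ENNReal.mul_rpow_of_nonneg _ _ hp0.le, ← h4]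
        exact h2.trans (mul_le_mul_right h3 _)
      calc (∫⁻ t, (‖∑ i, c a i * (x i : α → ℂ) t‖₊ : ℝ≥0∞) ^ p ∂μ) ^ (1/p)
          ≤ ((ENNReal.ofReal M * eLpNorm (U a) (ENNReal.ofReal p) μ) ^ p) ^ (1/p) :=
            ENNReal.rpow_le_rpow this (by positivity)
        _ = ENNReal.ofReal M * eLpNorm (U a) (ENNReal.ofReal p) μ := by
            rw [← ENNReal.rpow_mul, mul_one_div_cancel hp0.ne', ENNReal.rpow_one]
    have hne : ENNReal.ofReal M * eLpNorm (U a) (ENNReal.ofReal p) μ ≠ ∞ :=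
      ENNReal.mul_ne_top ENNReal.ofReal_ne_top (Lp.eLpNorm_ne_top _)
    calc ‖∑ i, c a i • x i‖
        = (eLpNorm (fun t => ∑ i, c a i * (x i : α → ℂ) t) (ENNReal.ofReal p) μ).toReal := by
          rw [Lp.norm_def]
          exact congrArg ENNReal.toReal (eLpNorm_congr_ae hsum_coe)
      _ ≤ (ENNReal.ofReal M * eLpNorm (U a) (ENNReal.ofReal p) μ).toReal :=
          ENNReal.toReal_mono hne h5
      _ = M * ‖U a‖ := by
          rw [ENNReal.toReal_mul, ENNReal.toReal_ofReal hM0, Lp.norm_def]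
      _ ≤ M * (‖U‖ * ‖a‖) :=
          mul_le_mul_of_nonneg_left (U.le_opNorm a) hM0
      _ = ‖U‖ * M * ‖a‖ := by ring
  refine ⟨LinearMap.mkContinuous L (‖U‖ * M) key, fun a => rfl, ?_⟩
  exact LinearMap.mkContinuous_norm_le L (mul_nonneg (norm_nonneg U) hM0) key
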